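/- arXiv:2105.10657 — 2 statements merged into one kernel-verified Lean document; each statement's English description precedes it below -/
import Mathlib

section
/- Let B be the n×n diagonal matrix with diagonal entries β₁,…,βₙ and define the coordinatewise SBX operator on row vectors by h(x₁,x₂) = x₁ + (x₂ − x₁)B. If n ≥ 2 and the βᵢ are not all equal, then there exists an orthogonal matrix M and vectors x₁, x₂ in ℝⁿ such that h(x₁M, x₂M) ≠ h(x₁,x₂)M. -/
theorem sbx_coordinatewise_not_rotation_invariant (n : ℕ) (hn : 2 ≤ n)
    (β : Fin n → ℝ) (hβ : ¬ ∀ i j, β i = β j)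
    (h : (Fin n → ℝ) → (Fin n → ℝ) → (Fin n → ℝ))
    (hdef : ∀ y₁ y₂, h y₁ y₂ = y₁ + Matrix.vecMul (y₂ - y₁) (Matrix.diagonal β)) :
    ∃ M ∈ Matrix.orthogonalGroup (Fin n) ℝ, ∃ x₁ x₂ : Fin n → ℝ,
      h (Matrix.vecMul x₁ M) (Matrix.vecMul x₂ M) ≠ Matrix.vecMul (h x₁ x₂) M := by
  push_neg at hβ
  obtain ⟨i, j, hij⟩ := hβ
  have hne : i ≠ j := fun e => hij (by rw [e])
  set σ : Equiv.Perm (Fin n) := Equiv.swap i j with hσ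
  set M : Matrix (Fin n) (Fin n) ℝ := σ.permMatrix ℝ with hM
  have hT : Matrix.transpose M = M := by
    rw [hM, Equiv.Perm.permMatrix, ← PEquiv.toMatrix_symm, ← Equiv.toPEquiv_symm, hσ,
      Equiv.symm_swap]
  have hMM : M * M = 1 := by
    rw [hM, Equiv.Perm.permMatrix, ← PEquiv.toMatrix_trans, ← Equiv.toPEquiv_trans, hσ,
      Equiv.swap_swap, Equiv.toPEquiv_refl, PEquiv.toMatrix_refl]
  have hMem : M ∈ Matrix.orthogonalGroup (Fin n) ℝ := by
    rw [Matrix.mem_orthogonalGroup_iff]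
    have hs : star M = Matrix.transpose M := rfl
    rw [hT, hMM]
  have key : ∀ v : Fin n → ℝ, Matrix.vecMul v M = fun k => v (σ k) := by
    intro v
    funext k
    have hE : ∀ a b, (σ.toPEquiv.toMatrix : Matrix (Fin n) (Fin n) ℝ) a b =
        (1 : Matrix (Fin n) (Fin n) ℝ) (σ a) b := fun a b => by
      simp [PEquiv.toMatrix_apply, Matrix.one_apply]
    simp only [Matrix.vecMul, dotProduct, hM, Equiv.Perm.permMatrix,
      hE, Matrix.one_apply]
    simp_rw [σ.apply_eq_iff_eq_symm_apply, mul_ite, mul_one, mul_zero,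
      Finset.sum_ite_eq', Finset.mem_univ, if_true]
    rw [hσ, Equiv.symm_swap]
  refine ⟨M, hMem, 0, Pi.single i 1, ?_⟩
  intro hcontra
  have hc := congrFun hcontra j
  simp only [hdef, key, Pi.add_apply] at hc
  simp [Matrix.vecMul_diagonal, hσ, hne, Pi.single_apply, Equiv.swap_apply_right,
    Equiv.swap_apply_left] at hc
  exact hij hc.symm
end

section
/- Let h : ℝᵗ → ℝ. Then h satisfies both h(x + b·𝟙) = h(x) + b for all real b and h(a·x) = a·h(x) for all real a, if and only if h has the form h(x₁,…,xₜ) = x₁ + ψ(x₂−x₁,…,xₜ−x_{t−1}) where ψ : ℝ^{t−1} → ℝ is positively homogeneous of degree 1 on ℝ and satisfies ψ(a·v) = a·ψ(v) for all real a. -/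
theorem translation_scale_invariant_iff (t : ℕ)
    (h : (Fin (t + 1) → ℝ) → ℝ) :
    ((∀ (x : Fin (t + 1) → ℝ) (b : ℝ), h (fun i => x i + b) = h x + b) ∧
      (∀ (x : Fin (t + 1) → ℝ) (a : ℝ), h (fun i => a * x i) = a * h x)) ↔
      ∃ ψ : (Fin t → ℝ) → ℝ,
        (∀ (v : Fin t → ℝ) (a : ℝ), ψ (fun i => a * v i) = a * ψ v) ∧
        ∀ x : Fin (t + 1) → ℝ,
          h x = x 0 + ψ (fun i => x i.succ - x i.castSucc) := by
  constructor
  · rintro ⟨htrans, hscale⟩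
    refine ⟨fun v => h (fun i => ∑ j ∈ Finset.range i.val,
        if hj : j < t then v ⟨j, hj⟩ else 0), ?_, ?_⟩
    · intro v a
      rw [← hscale (fun i => ∑ j ∈ Finset.range i.val,
        if hj : j < t then v ⟨j, hj⟩ else 0) a]
      beta_reduce
      congr 1
      funext i
      rw [Finset.mul_sum]
      refine Finset.sum_congr rfl fun j _ => ?_
      split <;> simp
    · intro x
      have key : ∀ n (hn : n < t + 1),
          (∑ j ∈ Finset.range n, if hj : j < t then
              x (⟨j, hj⟩ : Fin t).succ - x (⟨j, hj⟩ : Fin t).castSucc else 0)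
            = x ⟨n, hn⟩ - x 0 := by
        intro n
        induction n with
        | zero => intro _; simp
        | succ k ih =>
          intro hk
          have hkt : k < t := Nat.lt_of_succ_lt_succ hk
          rw [Finset.sum_range_succ, ih (Nat.lt_of_succ_lt hk), dif_pos hkt]
          have h1 : (⟨k, hkt⟩ : Fin t).succ = ⟨k + 1, hk⟩ := rfl
          have h2 : (⟨k, hkt⟩ : Fin t).castSucc = ⟨k, Nat.lt_of_succ_lt hk⟩ := rfl
          rw [h1, h2]; ring
      have hx : (fun i : Fin (t + 1) => ∑ j ∈ Finset.range i.val,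
          if hj : j < t then
            x (⟨j, hj⟩ : Fin t).succ - x (⟨j, hj⟩ : Fin t).castSucc else 0)
          = fun i => x i - x 0 := by
        funext i
        rw [key i.val i.isLt]
      calc h x = h (fun i => (x i - x 0) + x 0) := by
            congr 1; funext i; ring
        _ = h (fun i => x i - x 0) + x 0 := htrans _ _
        _ = x 0 + h (fun i => x i - x 0) := by ring
        _ = _ := by rw [← hx]
  · rintro ⟨ψ, hψ, hrep⟩
    constructor
    · intro x b
      rw [hrep, hrep x]
      have : (fun i : Fin t => (x i.succ + b) - (x i.castSucc + b))
          = fun i => x i.succ - x i.castSucc := by funext i; ring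
      rw [this]; ring
    · intro x a
      rw [hrep, hrep x]
      have : (fun i : Fin t => a * x i.succ - a * x i.castSucc)
          = fun i => a * (x i.succ - x i.castSucc) := by funext i; ring
      rw [this, hψ]; ring
end
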